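/- Let G = H × K be a direct product of finite groups. If every normalized torsion unit of ℤG is conjugate in the units of ℚG to an element of G, then every normalized torsion unit of ℤH is conjugate in the units of ℚH to an element of H. -/

import Mathlib

/-- The first Zassenhaus conjecture for a finite group `G`: every normalized
torsion unit of `ℤG` (viewed inside `ℚG` as a unit with integral coefficients
and augmentation `1`) is conjugate in the units of `ℚG` to an element of `G`. -/
def ZC1 (G : Type*) [Group G] [Fintype G] : Prop :=
  ∀ u : (MonoidAlgebra ℚ G)ˣ,
    (∀ g : G, ∃ z : ℤ, (u : MonoidAlgebra ℚ G).coeff g = (z : ℚ)) →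
    (∑ g : G, (u : MonoidAlgebra ℚ G).coeff g = 1) →
    (∃ n : ℕ, 0 < n ∧ u ^ n = 1) →
    ∃ (g : G) (v : (MonoidAlgebra ℚ G)ˣ),
      (v : MonoidAlgebra ℚ G) * u * (↑v⁻¹ : MonoidAlgebra ℚ G)
        = MonoidAlgebra.of ℚ G g

/-- Remark 2.4: the first Zassenhaus conjecture is inherited by direct factors:
if it holds for `H × K` then it holds for `H`. -/
theorem zc1_of_directProduct {H K : Type*} [Group H] [Group K]
    [Fintype H] [Fintype K] (h : ZC1 (H × K)) : ZC1 H := by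
  intro u hint haug htor
  classical
  set ι : MonoidAlgebra ℚ H →+* MonoidAlgebra ℚ (H × K) :=
    MonoidAlgebra.mapDomainRingHom ℚ (MonoidHom.inl H K) with hι
  set π : MonoidAlgebra ℚ (H × K) →+* MonoidAlgebra ℚ H :=
    MonoidAlgebra.mapDomainRingHom ℚ (MonoidHom.fst H K) with hπ
  have hιapp : ∀ (x : MonoidAlgebra ℚ H), (ι x).coeff = Finsupp.mapDomain (fun a => (a, 1)) x.coeff := by
    intro x; rfl
  have hπapp : ∀ (x : MonoidAlgebra ℚ (H × K)), (π x).coeff = Finsupp.mapDomain Prod.fst x.coeff := by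
    intro x; rfl
  have hπι : ∀ x : MonoidAlgebra ℚ H, π (ι x) = x := by
    intro x
    apply MonoidAlgebra.coeff_injective
    rw [hπapp, hιapp, ← Finsupp.mapDomain_comp]
    exact Finsupp.mapDomain_id
  have hinj : Function.Injective (fun a : H => (a, (1 : K))) := by
    intro a b hab
    simpa using congrArg Prod.fst hab
  set u' : (MonoidAlgebra ℚ (H × K))ˣ := Units.map ι.toMonoidHom u with hu'
  have hu'coe : (u' : MonoidAlgebra ℚ (H × K)) = ι (u : MonoidAlgebra ℚ H) := rfl
  have hint' : ∀ g : H × K, ∃ z : ℤ, (u' : MonoidAlgebra ℚ (H × K)).coeff g = (z : ℚ) := by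
    rintro ⟨a, b⟩
    rw [hu'coe, hιapp]
    by_cases hb : b = 1
    · subst hb
      rw [show ((a, (1:K))) = (fun a : H => (a, (1:K))) a from rfl,
        Finsupp.mapDomain_apply hinj]
      exact hint a
    · refine ⟨0, ?_⟩
      rw [Finsupp.mapDomain_notin_range]
      · simp
      · rintro ⟨c, hc⟩
        exact hb (congrArg Prod.snd hc).symm
  have haug' : ∑ g : H × K, (u' : MonoidAlgebra ℚ (H × K)).coeff g = 1 := by
    rw [hu'coe, hιapp]
    rw [(Finsupp.sum_fintype
      (Finsupp.mapDomain (fun a : H => (a, (1:K))) (u : MonoidAlgebra ℚ H).coeff)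
      (fun _ x => x) (fun _ => rfl)).symm]
    rw [Finsupp.sum_mapDomain_index (by simp) (by intros; rfl)]
    rw [(Finsupp.sum_fintype (u : MonoidAlgebra ℚ H).coeff (fun _ x => x)
      (fun _ => rfl)).symm] at haug
    exact haug
  have htor' : ∃ n : ℕ, 0 < n ∧ u' ^ n = 1 := by
    obtain ⟨n, hn, hun⟩ := htor
    exact ⟨n, hn, by rw [hu', ← map_pow, hun, map_one]⟩
  obtain ⟨g, v, hv⟩ := h u' hint' haug' htor'
  refine ⟨g.1, Units.map π.toMonoidHom v, ?_⟩
  have h2 : π ((v : MonoidAlgebra ℚ (H × K)) * u' * (↑v⁻¹ : MonoidAlgebra ℚ (H × K)))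
      = π (MonoidAlgebra.of ℚ (H × K) g) := by rw [hv]
  rw [map_mul, map_mul, hu'coe, hπι] at h2
  have h3 : π (MonoidAlgebra.of ℚ (H × K) g) = MonoidAlgebra.of ℚ H g.1 := by
    apply MonoidAlgebra.coeff_injective
    rw [hπapp]
    simp [MonoidAlgebra.of_apply, Finsupp.mapDomain_single]
  rw [h3] at h2
  exact h2
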